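/- Let G be a simple graph with n ≥ 3 vertices and m edges, all degrees positive. Then for any two distinct vertices with degrees d_j and d_k, M_1(G) ≥ 4m²/n + (1/2)(d_j − d_k)² + (2n/(n−2))·(2m/n − (d_j + d_k)/2)², where M_1(G) = ∑_i d_i². -/
import Mathlib


open Finset

theorem stmt4 {V : Type*} [Fintype V] [DecidableEq V] (G : SimpleGraph V)
    [DecidableRel G.Adj] (hn : 3 ≤ Fintype.card V)
    (hdeg : ∀ v : V, 0 < G.degree v) (m : ℕ) (hm : m = G.edgeFinset.card)
    (j k : V) (hjk : j ≠ k) :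
    ∑ v : V, (G.degree v : ℝ) ^ 2 ≥
      4 * (m : ℝ) ^ 2 / (Fintype.card V : ℝ)
      + (1 / 2) * ((G.degree j : ℝ) - (G.degree k : ℝ)) ^ 2
      + (2 * (Fintype.card V : ℝ) / ((Fintype.card V : ℝ) - 2)) *
          (2 * (m : ℝ) / (Fintype.card V : ℝ)
            - ((G.degree j : ℝ) + (G.degree k : ℝ)) / 2) ^ 2 := by
  set n : ℝ := (Fintype.card V : ℝ) with hndef
  have hn3 : (3 : ℝ) ≤ n := by rw [hndef]; exact_mod_cast hn
  have hn0 : n ≠ 0 := by linarith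
  have hn2 : (0:ℝ) < n - 2 := by linarith
  have hsub : ({j, k} : Finset V) ⊆ univ := subset_univ _
  set s : Finset V := univ \ {j, k} with hsdef
  have hcard2 : ({j, k} : Finset V).card = 2 := card_pair hjk
  have hcards : (s.card : ℝ) = n - 2 := by
    rw [hsdef, card_sdiff_of_subset hsub, hcard2]
    have : 2 ≤ Fintype.card V := by omega
    push_cast [Finset.card_univ]
    rw [Nat.cast_sub this]
    push_cast; ring
  have hsum : ∑ v : V, (G.degree v : ℝ) = 2 * m := by
    rw [hm]
    exact_mod_cast congrArg (Nat.cast : ℕ → ℝ) G.sum_degrees_eq_twice_card_edges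
  have hsplit : ∀ f : V → ℝ, ∑ v ∈ s, f v = (∑ v : V, f v) - (f j + f k) := by
    intro f
    rw [hsdef, sum_sdiff_eq_sub hsub, sum_pair hjk]
  have hT : ∑ v ∈ s, (G.degree v : ℝ)
      = 2 * m - ((G.degree j : ℝ) + (G.degree k : ℝ)) := by
    rw [hsplit, hsum]
  have hCS : (∑ v ∈ s, (G.degree v : ℝ)) ^ 2
      ≤ (s.card : ℝ) * ∑ v ∈ s, (G.degree v : ℝ) ^ 2 :=
    sq_sum_le_card_mul_sum_sq
  rw [hT, hcards] at hCS
  have hA : ∑ v ∈ s, (G.degree v : ℝ) ^ 2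
      = (∑ v : V, (G.degree v : ℝ) ^ 2) - ((G.degree j : ℝ) ^ 2 + (G.degree k : ℝ) ^ 2) := by
    rw [hsplit]
  rw [hA] at hCS
  set a : ℝ := (G.degree j : ℝ)
  set b : ℝ := (G.degree k : ℝ)
  set M : ℝ := ∑ v : V, (G.degree v : ℝ) ^ 2
  have key : 4 * (m : ℝ) ^ 2 / n + (1 / 2) * (a - b) ^ 2
      + (2 * n / (n - 2)) * (2 * (m:ℝ) / n - (a + b) / 2) ^ 2
      = a ^ 2 + b ^ 2 + (2 * (m:ℝ) - (a + b)) ^ 2 / (n - 2) := by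
    field_simp
    ring
  rw [ge_iff_le, key]
  have h2 : (2 * (m:ℝ) - (a + b)) ^ 2 / (n - 2) ≤ M - (a ^ 2 + b ^ 2) :=
    (div_le_iff₀ hn2).mpr (by linarith [hCS])
  linarith
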